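/- Let p : E → B be a G-fibration and B' ⊆ B a G-invariant subset; set E' = p⁻¹(B') and let p' : E' → B' be the restriction of p. Then the square consisting of the invariant parametrized fibrations Ψ' : (E')^I_{B'} ×_{E'/G} (E')^I_{B'} → E' ×_{B'/G} E' and Ψ : E^I_B ×_{E/G} E^I_B → E ×_{B/G} E together with the inclusion maps is a pullback square; consequently, the invariant parametrized topological complexity satisfies TC^G[p' : E' → B'] ≤ TC^G[p : E → B]. -/

import Mathlib

/-- A path lies in a single fibre of `p`. -/
def fibrePath {E B : Type} [TopologicalSpace E] (p : E → B) (γ : C(unitInterval, E)) : Prop :=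
  ∃ b : B, ∀ t : unitInterval, p (γ t) = b

/-- The base `E ×_{B/G} E` of the invariant parametrized fibration, for the action
`aB` of `G` on `B`. -/
def invBase (G : Type) {E B : Type} (aB : G → B → B) (p : E → B) : Set (E × E) :=
  {z | ∃ g : G, p z.1 = aB g (p z.2)}

/-- A `(G×G)`-equivariant section of the invariant parametrized fibration
`Ψ : E^I_B ×_{E/G} E^I_B → E ×_{B/G} E`, `Ψ(γ,δ) = (γ(0),δ(1))`, over `U`. -/
def InvSecOver (G : Type) {E B : Type} [TopologicalSpace E]
    (aE : G → E → E) (p : E → B) (U : Set (E × E)) : Prop :=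
  ∃ s : U → C(unitInterval, E) × C(unitInterval, E),
    Continuous s ∧
    (∀ u : U, fibrePath p (s u).1 ∧ fibrePath p (s u).2) ∧
    (∀ u : U, ∃ g : G, (s u).2 0 = aE g ((s u).1 1)) ∧
    (∀ u : U, (s u).1 0 = u.1.1 ∧ (s u).2 1 = u.1.2) ∧
    (∀ (g₁ g₂ : G) (u : U) (hu : (aE g₁ u.1.1, aE g₂ u.1.2) ∈ U),
      ∀ t : unitInterval,
        (s ⟨_, hu⟩).1 t = aE g₁ ((s u).1 t) ∧ (s ⟨_, hu⟩).2 t = aE g₂ ((s u).2 t))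

/-- `TC^G[p : E → B] ≤ n`: there is a cover of `E ×_{B/G} E` by `n` relatively open
`(G×G)`-invariant subsets, each admitting a `(G×G)`-equivariant section of `Ψ`. -/
def InvPTCle (G : Type) {E B : Type} [TopologicalSpace E] [TopologicalSpace B]
    (aE : G → E → E) (aB : G → B → B) (p : E → B) (n : ℕ) : Prop :=
  ∃ U : Fin n → Set (E × E),
    (∀ i, ∃ V : Set (E × E), IsOpen V ∧ U i = V ∩ invBase G aB p) ∧
    (∀ i (g₁ g₂ : G) (z : E × E), z ∈ U i → (aE g₁ z.1, aE g₂ z.2) ∈ U i) ∧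
    invBase G aB p ⊆ (⋃ i, U i) ∧
    ∀ i, InvSecOver G aE p (U i)

/-- The invariant parametrized topological complexity `TC^G[p : E → B]`. -/
noncomputable def invPTC (G : Type) {E B : Type} [TopologicalSpace E] [TopologicalSpace B]
    (aE : G → E → E) (aB : G → B → B) (p : E → B) : ℕ∞ :=
  sInf {n : ℕ∞ | ∃ k : ℕ, n = (k : ℕ∞) ∧ InvPTCle G aE aB p k}

/-- `p` is a `G`-fibration. -/
def IsGFibration (G : Type) [Group G] [TopologicalSpace G]
    {E B : Type} [TopologicalSpace E] [TopologicalSpace B]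
    [MulAction G E] [MulAction G B] (p : E → B) : Prop :=
  ∀ (X : Type) (_ : TopologicalSpace X) (_ : MulAction G X) (_ : ContinuousSMul G X)
    (H : X × unitInterval → B) (h : X → E),
      Continuous H → (∀ (g : G) (x : X) (t : unitInterval), H (g • x, t) = g • H (x, t)) →
      Continuous h → (∀ (g : G) (x : X), h (g • x) = g • h x) →
      (∀ x : X, p (h x) = H (x, 0)) →
      ∃ Ht : X × unitInterval → E, Continuous Ht ∧
        (∀ (g : G) (x : X) (t : unitInterval), Ht (g • x, t) = g • Ht (x, t)) ∧
        (∀ (x : X) (t : unitInterval), p (Ht (x, t)) = H (x, t)) ∧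
        (∀ x : X, Ht (x, 0) = h x)

/-- For a `G`-fibration `p : E → B` and a `G`-invariant subset
`B' ⊆ B`, with `E' = p⁻¹(B')` and `p' : E' → B'` the restriction of `p`, the square of
the invariant parametrized fibrations `Ψ'` and `Ψ` with the inclusions is a pullback
square (any pair of fibre paths in `E` whose endpoints land in `E'` lies entirely in
`E'`), and consequently `TC^G[p' : E' → B'] ≤ TC^G[p : E → B]`. -/
theorem invPTC_restriction_le (G : Type) [Group G] [TopologicalSpace G]
    {E B : Type} [TopologicalSpace E] [TopologicalSpace B]
    [MulAction G E] [ContinuousSMul G E] [MulAction G B] [ContinuousSMul G B]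
    (p : E → B) (hpc : Continuous p)
    (hequiv : ∀ (g : G) (e : E), p (g • e) = g • p e)
    (hfib : IsGFibration G p)
    (B' : Set B) (hB'inv : ∀ (g : G) (b : B), b ∈ B' → g • b ∈ B') :
    -- the pullback property of the square
    (∀ γ δ : C(unitInterval, E), fibrePath p γ → fibrePath p δ →
      (∃ g : G, δ 0 = g • γ 1) → γ 0 ∈ p ⁻¹' B' → δ 1 ∈ p ⁻¹' B' →
      ∀ t : unitInterval, γ t ∈ p ⁻¹' B' ∧ δ t ∈ p ⁻¹' B') ∧
    -- consequently, `TC^G[p'] ≤ TC^G[p]`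
    invPTC G
      (fun (g : G) (x : (p ⁻¹' B' : Set E)) =>
        (⟨g • x.1, by
          have hx := x.2
          simp only [Set.mem_preimage] at hx ⊢
          rw [hequiv]
          exact hB'inv g _ hx⟩ : (p ⁻¹' B' : Set E)))
      (fun (g : G) (b : B') => (⟨g • b.1, hB'inv g b.1 b.2⟩ : B'))
      (fun x : (p ⁻¹' B' : Set E) => (⟨p x.1, x.2⟩ : B'))
      ≤ invPTC G (fun (g : G) (e : E) => g • e) (fun (g : G) (b : B) => g • b) p := by
  constructor
  · rintro γ δ ⟨b, hb⟩ ⟨b', hb'⟩ _ hγ0 hδ1 t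
    simp only [Set.mem_preimage] at *
    constructor
    · rw [hb t]; rw [hb 0] at hγ0; exact hγ0
    · rw [hb' t]; rw [hb' 1] at hδ1; exact hδ1
  · apply sInf_le_sInf
    rintro n ⟨k, rfl, hk⟩
    refine ⟨k, rfl, ?_⟩
    obtain ⟨U, hUopen, hUinv, hUcover, hUsec⟩ := hk
    set E' := (p ⁻¹' B' : Set E)
    have hι : Continuous (fun z : E' × E' => ((z.1 : E), (z.2 : E))) :=
      (continuous_subtype_val.comp continuous_fst).prodMk
        (continuous_subtype_val.comp continuous_snd)
    refine ⟨fun i => (fun z : E' × E' => ((z.1 : E), (z.2 : E))) ⁻¹' U i, ?_, ?_, ?_, ?_⟩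
    · intro i
      obtain ⟨V, hV, hVeq⟩ := hUopen i
      refine ⟨(fun z : E' × E' => ((z.1 : E), (z.2 : E))) ⁻¹' V, hV.preimage hι, ?_⟩
      ext z
      simp only [Set.mem_preimage, hVeq, Set.mem_inter_iff, invBase, Set.mem_setOf_eq,
        Subtype.ext_iff]
    · intro i g₁ g₂ z hz
      exact hUinv i g₁ g₂ _ hz
    · intro z hz
      obtain ⟨g, hg⟩ := hz
      have : ((z.1 : E), (z.2 : E)) ∈ invBase G (fun (g : G) (b : B) => g • b) p :=
        ⟨g, congrArg Subtype.val hg⟩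
      obtain ⟨_, ⟨i, rfl⟩, hi⟩ := hUcover this
      exact Set.mem_iUnion.2 ⟨i, hi⟩
    · intro i
      obtain ⟨s, hsc, hsfib, hsg, hsend, hseqv⟩ := hUsec i
      set W : Set (E' × E') := (fun z : E' × E' => ((z.1 : E), (z.2 : E))) ⁻¹' U i with hW
      have hι' : Continuous (fun u : W => (⟨((u.1.1 : E), (u.1.2 : E)), u.2⟩ : U i)) := by
        apply Continuous.subtype_mk
        exact hι.comp continuous_subtype_val
      set ι' : W → U i := fun u => ⟨((u.1.1 : E), (u.1.2 : E)), u.2⟩ with hι'def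
      -- membership lemmas
      have hmem : ∀ u : W, ∀ t : unitInterval,
          (s (ι' u)).1 t ∈ E' ∧ (s (ι' u)).2 t ∈ E' := by
        intro u t
        obtain ⟨⟨b, hb⟩, ⟨b', hb'⟩⟩ := hsfib (ι' u)
        obtain ⟨h0, h1⟩ := hsend (ι' u)
        have hγ0 : (s (ι' u)).1 0 ∈ E' := by rw [h0]; exact u.1.1.2
        have hδ1 : (s (ι' u)).2 1 ∈ E' := by rw [h1]; exact u.1.2.2
        simp only [E', Set.mem_preimage] at hγ0 hδ1 ⊢
        constructor
        · rw [hb t]; rw [hb 0] at hγ0; exact hγ0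
        · rw [hb' t]; rw [hb' 1] at hδ1; exact hδ1
      refine ⟨fun u => (⟨fun t => ⟨(s (ι' u)).1 t, (hmem u t).1⟩,
          ((s (ι' u)).1.continuous).subtype_mk _⟩,
        ⟨fun t => ⟨(s (ι' u)).2 t, (hmem u t).2⟩,
          ((s (ι' u)).2.continuous).subtype_mk _⟩), ?_, ?_, ?_, ?_, ?_⟩
      · apply Continuous.prodMk
        · apply ContinuousMap.continuous_of_continuous_uncurry
          apply Continuous.subtype_mk
          exact ContinuousEval.continuous_eval.comp
            (((continuous_fst.comp hsc).comp (hι'.comp continuous_fst)).prodMk continuous_snd)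
        · apply ContinuousMap.continuous_of_continuous_uncurry
          apply Continuous.subtype_mk
          exact ContinuousEval.continuous_eval.comp
            (((continuous_snd.comp hsc).comp (hι'.comp continuous_fst)).prodMk continuous_snd)
      · intro u
        obtain ⟨⟨b, hb⟩, ⟨b', hb'⟩⟩ := hsfib (ι' u)
        constructor
        · exact ⟨⟨p ((s (ι' u)).1 0), (hmem u 0).1⟩, fun t => Subtype.ext (by
            simp only [ContinuousMap.coe_mk]; rw [hb t, hb 0])⟩
        · exact ⟨⟨p ((s (ι' u)).2 0), (hmem u 0).2⟩, fun t => Subtype.ext (by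
            simp only [ContinuousMap.coe_mk]; rw [hb' t, hb' 0])⟩
      · intro u
        obtain ⟨g, hg⟩ := hsg (ι' u)
        exact ⟨g, Subtype.ext hg⟩
      · intro u
        obtain ⟨h0, h1⟩ := hsend (ι' u)
        exact ⟨Subtype.ext h0, Subtype.ext h1⟩
      · intro g₁ g₂ u hu t
        exact ⟨Subtype.ext (hseqv g₁ g₂ (ι' u) hu t).1,
          Subtype.ext (hseqv g₁ g₂ (ι' u) hu t).2⟩
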